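/- Let ε, λ > 0 and define K(x,y) = −(λ/(2ε))·y·G(λ(x²−y²)/(4ε)) and L(x,y) = −(λ/(2ε))·y·G(−λ(x²−y²)/(4ε)). For a continuous function f : [0,1] → ℝ define (Tf)(x) = f(x) − ∫₀ˣ K(x,y)f(y)dy and (Sf)(x) = f(x) + ∫₀ˣ L(x,y)f(y)dy. Then for every continuous f : [0,1] → ℝ, S(Tf) = f and T(Sf) = f; that is, the backstepping transformation T is invertible on C⁰([0,1]) and its inverse is the transformation S with kernel L. -/

import Mathlib

open Real Set Filter MeasureTheory intervalIntegral

noncomputable section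

/-- The entire function `G(s) = ∑ sⁿ/(n!·(n+1)!)`. -/
def Gfun (s : ℝ) : ℝ := ∑' n : ℕ, s ^ n / ((n.factorial : ℝ) * ((n + 1).factorial : ℝ))

/-- Backstepping control kernel `K`. -/
def Kker (ε lam x y : ℝ) : ℝ := -(lam / (2 * ε)) * y * Gfun (lam * (x ^ 2 - y ^ 2) / (4 * ε))

/-- Inverse control kernel `L`. -/
def Lker (ε lam x y : ℝ) : ℝ := -(lam / (2 * ε)) * y * Gfun (-(lam * (x ^ 2 - y ^ 2)) / (4 * ε))

/-- Observer kernel `P`. -/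
def Pker (ε lam x y : ℝ) : ℝ := -(lam / (2 * ε)) * x * Gfun (lam * (y ^ 2 - x ^ 2) / (4 * ε))

/-- Inverse observer kernel `Q`. -/
def Qker (ε lam x y : ℝ) : ℝ := -(lam / (2 * ε)) * x * Gfun (-(lam * (y ^ 2 - x ^ 2)) / (4 * ε))

/-- Observer gain `p₁(x) = -εq·P(x,1) - ε·P_y(x,1)`. -/
def p1fun (ε lam q x : ℝ) : ℝ :=
  -(ε * q) * Pker ε lam x 1 - ε * deriv (fun y => Pker ε lam x y) 1

/-- Control gain `k(y) = r·K(1,y) + K_x(1,y)` with `r = q - λ/(2ε)`. -/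
def kfun (ε lam q y : ℝ) : ℝ :=
  (q - lam / (2 * ε)) * Kker ε lam 1 y + deriv (fun x => Kker ε lam x y) 1

/-- `g(x) = p₁(x) - ∫₀ˣ K(x,y)p₁(y) dy`. -/
def gfun (ε lam q x : ℝ) : ℝ :=
  p1fun ε lam q x - ∫ y in (0:ℝ)..x, Kker ε lam x y * p1fun ε lam q y

/-- The `L²(0,1)` norm. -/
def L2norm (f : ℝ → ℝ) : ℝ := Real.sqrt (∫ x in (0:ℝ)..1, f x ^ 2)


lemma Gterm_bound (s : ℝ) (n : ℕ) :
    ‖s ^ n / ((n.factorial : ℝ) * ((n + 1).factorial : ℝ))‖ ≤ ‖s‖ ^ n / n.factorial := by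
  rw [norm_div, norm_pow]
  apply div_le_div_of_nonneg_left (by positivity) (by positivity)
  rw [Real.norm_eq_abs, abs_of_pos (by positivity)]
  calc (n.factorial : ℝ) = n.factorial * 1 := by ring
  _ ≤ n.factorial * (n+1).factorial := by
      apply mul_le_mul_of_nonneg_left _ (by positivity)
      exact_mod_cast Nat.one_le_iff_ne_zero.2 (Nat.factorial_ne_zero _)

lemma Gsummable (s : ℝ) :
    Summable (fun n : ℕ => s ^ n / ((n.factorial : ℝ) * ((n + 1).factorial : ℝ))) := by
  apply Summable.of_norm
  apply Summable.of_nonneg_of_le (fun n => norm_nonneg _) (Gterm_bound s)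
  exact Real.summable_pow_div_factorial ‖s‖

lemma Gcont : Continuous Gfun := by
  rw [continuous_iff_continuousAt]
  intro s
  have h1 : ContinuousOn Gfun (Icc (s - 1) (s + 1)) := by
    unfold Gfun
    refine continuousOn_tsum (f := fun (n : ℕ) (x : ℝ) => x ^ n / ((n.factorial : ℝ) * ((n + 1).factorial : ℝ))) (u := fun n => (|s| + 1) ^ n / n.factorial) ?_
      (Real.summable_pow_div_factorial _) ?_
    · intro n
      exact ((continuous_pow n).div_const _).continuousOn
    · intro n x hx
      refine (Gterm_bound x n).trans ?_
      apply div_le_div_of_nonneg_right ?_ (by positivity)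
      apply pow_le_pow_left₀ (norm_nonneg _)
      rw [Real.norm_eq_abs, abs_le]
      simp only [mem_Icc] at hx
      cases abs_cases s with
      | inl h => constructor <;> linarith [h.1]
      | inr h => constructor <;> linarith [h.1]
  exact h1.continuousAt (Icc_mem_nhds (by linarith) (by linarith))

lemma betaInt (m : ℕ) : ∀ (n : ℕ) (v : ℝ),
    ∫ w in (0:ℝ)..v, w ^ n * (v - w) ^ m
      = (n.factorial * m.factorial / (n + m + 1).factorial : ℝ) * v ^ (n + m + 1) := by
  induction m with
  | zero =>
    intro n v
    simp only [pow_zero, mul_one, Nat.factorial_zero, Nat.cast_one, Nat.add_zero]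
    rw [integral_pow]
    have : ((n+1).factorial : ℝ) = (n+1) * n.factorial := by
      exact_mod_cast Nat.factorial_succ n
    rw [this]
    have h1 : ((n:ℝ)+1) ≠ 0 := by positivity
    have h2 : (n.factorial : ℝ) ≠ 0 := by positivity
    field_simp
    ring
  | succ m IH =>
    intro n v
    have hu : ∀ w ∈ uIcc (0:ℝ) v, HasDerivAt (fun w => (v - w) ^ (m+1))
        (-((m:ℝ)+1) * (v - w) ^ m) w := by
      intro w _
      have := (((hasDerivAt_id w).const_sub v).pow (m+1))
      convert this using 1
      · rfl
      · rfl
      · rfl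
      simp only [id]
      push_cast
      ring
    have hv : ∀ w ∈ uIcc (0:ℝ) v, HasDerivAt (fun w => w ^ (n+1) / ((n:ℝ)+1))
        (w ^ n) w := by
      intro w _
      have := ((hasDerivAt_pow (n+1) w)).div_const ((n:ℝ)+1)
      convert this using 1
      · rfl
      · rfl
      have h1 : ((n:ℝ)+1) ≠ 0 := by positivity
      field_simp
      push_cast
      ring
    have hiu : IntervalIntegrable (fun w => -((m:ℝ)+1) * (v - w) ^ m) volume 0 v := by
      apply Continuous.intervalIntegrable; fun_prop
    have hiv : IntervalIntegrable (fun w : ℝ => w ^ n) volume 0 v := by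
      apply Continuous.intervalIntegrable; fun_prop
    have key := intervalIntegral.integral_mul_deriv_eq_deriv_mul hu hv hiu hiv
    have e1 : ∀ w : ℝ, w ^ n * (v - w) ^ (m+1) = (v-w)^(m+1) * w ^ n := fun w => by ring
    simp only [e1]
    rw [key]
    have e2 : (∫ w in (0:ℝ)..v, -((m:ℝ)+1) * (v - w) ^ m * (w ^ (n+1) / ((n:ℝ)+1)))
        = (-((m:ℝ)+1) / ((n:ℝ)+1)) * ∫ w in (0:ℝ)..v, w ^ (n+1) * (v - w) ^ m := by
      rw [← intervalIntegral.integral_const_mul]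
      congr 1; funext w; ring
    rw [e2, IH (n+1) v]
    have h3 : ((n + (m+1) + 1).factorial : ℝ) = ((n+1) + m + 1).factorial := by norm_num; ring_nf
    have hfact : ((n+1) + m + 1).factorial = (n + (m+1) + 1).factorial := by ring_nf
    rw [hfact]
    have h1 : ((n:ℝ)+1) ≠ 0 := by positivity
    have h2 : ((n + (m+1) + 1).factorial : ℝ) ≠ 0 := by positivity
    have hcast : (((n+1).factorial : ℝ)) = ((n:ℝ)+1) * n.factorial := by
      exact_mod_cast Nat.factorial_succ n
    have hcast2 : (((m+1).factorial : ℝ)) = ((m:ℝ)+1) * m.factorial := by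
      exact_mod_cast Nat.factorial_succ m
    rw [hcast, hcast2]
    simp only [sub_self, zero_pow, Nat.succ_ne_zero, ne_eq, not_false_iff]
    field_simp
    ring

lemma coeff_id (N : ℕ) :
    ∑ p ∈ Finset.HasAntidiagonal.antidiagonal N,
        ((-1:ℝ))^p.2 / (((p.1+1).factorial : ℝ) * ((p.2+1).factorial : ℝ))
      = (1 + (-1:ℝ)^N) / ((N+2).factorial : ℝ) := by
  rw [Finset.Nat.sum_antidiagonal_eq_sum_range_succ_mk]
  have hC : ∑ k ∈ Finset.range (N+1), ((-1:ℝ))^k * (((N+2).choose (k+1) : ℕ) : ℝ)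
      = 1 + (-1:ℝ)^N := by
    have h0 : (∑ i ∈ Finset.range (N+2+1), (-1:ℤ)^i * ((N+2).choose i : ℤ)) = 0 :=
      Int.alternating_sum_range_choose_of_ne (by omega)
    have h0' : (∑ i ∈ Finset.range (N+3), (-1:ℝ)^i * (((N+2).choose i : ℕ) : ℝ)) = 0 := by
      have := congrArg (fun z : ℤ => (z : ℝ)) h0
      push_cast at this
      convert this using 2
    rw [Finset.sum_range_succ, Finset.sum_range_succ'] at h0'
    simp only [pow_succ, Nat.choose_self, Nat.choose_zero_right, Nat.cast_one, pow_zero] at h0'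
    have : ∑ k ∈ Finset.range (N+1), (-1:ℝ)^k * (-1) * (((N+2).choose (k+1) : ℕ) : ℝ)
        = -∑ k ∈ Finset.range (N+1), (-1:ℝ)^k * (((N+2).choose (k+1) : ℕ) : ℝ) := by
      rw [← Finset.sum_neg_distrib]
      exact Finset.sum_congr rfl (fun k _ => by ring)
    rw [this] at h0'
    have hNN : (-1:ℝ)^N * (-1) * (-1) = (-1:ℝ)^N := by ring
    nlinarith [h0']
  have hterm : ∀ k ∈ Finset.range (N+1),
      ((-1:ℝ))^(N-k) / (((k+1).factorial : ℝ) * ((N-k+1).factorial : ℝ))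
        = ((-1:ℝ)^N / ((N+2).factorial : ℝ)) * ((-1:ℝ)^k * (((N+2).choose (k+1) : ℕ) : ℝ)) := by
    intro k hk
    have hkN : k ≤ N := by simpa [Nat.lt_succ_iff] using Finset.mem_range.1 hk
    have hfac : (((N+2).choose (k+1) : ℕ) : ℝ) * (((k+1).factorial : ℝ) * ((N-k+1).factorial : ℝ))
        = ((N+2).factorial : ℝ) := by
      have hnat := Nat.choose_mul_factorial_mul_factorial (show k+1 ≤ N+2 by omega)
      have hsub : N+2-(k+1) = N-k+1 := by omega
      rw [hsub] at hnat
      exact_mod_cast congrArg (fun z : ℕ => (z : ℝ)) (by rw [← hnat]; ring)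
    have hsgn : ((-1:ℝ))^(N-k) = (-1:ℝ)^N * (-1:ℝ)^k := by
      have h1 : ((-1:ℝ))^(N-k) * (-1:ℝ)^k = (-1:ℝ)^N := by
        rw [← pow_add, Nat.sub_add_cancel hkN]
      have h2 : ((-1:ℝ))^k * (-1:ℝ)^k = 1 := by
        rw [← pow_add]
        exact Even.neg_one_pow ⟨k, rfl⟩
      calc ((-1:ℝ))^(N-k) = ((-1:ℝ))^(N-k) * (((-1:ℝ))^k * (-1:ℝ)^k) := by rw [h2, mul_one]
      _ = (-1:ℝ)^N * (-1:ℝ)^k := by rw [← mul_assoc, h1]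
    have h1 : (((k+1).factorial : ℝ) * ((N-k+1).factorial : ℝ)) ≠ 0 := by positivity
    rw [div_eq_iff h1, hsgn]
    have h2 : ((N+2).factorial : ℝ) ≠ 0 := by positivity
    field_simp
    linear_combination (-1:ℝ) * hfac
  rw [Finset.sum_congr rfl hterm, ← Finset.mul_sum, hC]
  have hNe : ((N+2).factorial : ℝ) ≠ 0 := by positivity
  have h2 : ((-1:ℝ))^N * (-1:ℝ)^N = 1 := by rw [← pow_add]; exact Even.neg_one_pow ⟨N, rfl⟩
  field_simp
  linear_combination h2

lemma GsummableNorm (s : ℝ) :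
    Summable (fun n : ℕ => ‖s ^ n / ((n.factorial : ℝ) * ((n + 1).factorial : ℝ))‖) :=
  Summable.of_nonneg_of_le (fun _ => norm_nonneg _) (Gterm_bound s)
    (Real.summable_pow_div_factorial ‖s‖)

lemma Gmul_eq_tsum (a b : ℝ) :
    Gfun a * Gfun b = ∑' p : ℕ × ℕ,
      (a ^ p.1 / ((p.1.factorial : ℝ) * ((p.1 + 1).factorial : ℝ))) *
      (b ^ p.2 / ((p.2.factorial : ℝ) * ((p.2 + 1).factorial : ℝ))) :=
  tsum_mul_tsum_of_summable_norm (GsummableNorm a) (GsummableNorm b)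

/-- summand of the expanded product under the convolution integral -/
def Pterm (v : ℝ) (p : ℕ × ℕ) (w : ℝ) : ℝ :=
  (w ^ p.1 / ((p.1.factorial : ℝ) * ((p.1 + 1).factorial : ℝ))) *
  ((-(v - w)) ^ p.2 / ((p.2.factorial : ℝ) * ((p.2 + 1).factorial : ℝ)))

/-- value of the integral of `Pterm` -/
def Hval (v : ℝ) (p : ℕ × ℕ) : ℝ :=
  (-1:ℝ)^p.2 * v^(p.1+p.2+1) /
    (((p.1+1).factorial : ℝ) * ((p.2+1).factorial : ℝ) * ((p.1+p.2+1).factorial : ℝ))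

lemma Pterm_cont (v : ℝ) (p : ℕ × ℕ) : Continuous (Pterm v p) := by
  unfold Pterm; fun_prop

lemma Pterm_bound {v : ℝ} (p : ℕ × ℕ) {w : ℝ} (hw : w ∈ Set.Ioc (0:ℝ) v) :
    ‖Pterm v p w‖ ≤ (v ^ p.1 / p.1.factorial) * (v ^ p.2 / p.2.factorial) := by
  obtain ⟨h0, h1⟩ := hw
  rw [Pterm, norm_mul]
  have b1 := Gterm_bound w p.1
  have b2 := Gterm_bound (-(v - w)) p.2
  have e1 : ‖w‖ ^ p.1 ≤ v ^ p.1 := by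
    apply pow_le_pow_left₀ (norm_nonneg _)
    rw [Real.norm_eq_abs, abs_of_pos h0]; exact h1
  have e2 : ‖-(v - w)‖ ^ p.2 ≤ v ^ p.2 := by
    apply pow_le_pow_left₀ (norm_nonneg _)
    rw [norm_neg, Real.norm_eq_abs, abs_of_nonneg (by linarith)]; linarith
  have f1 : (0:ℝ) < p.1.factorial := by positivity
  have f2 : (0:ℝ) < p.2.factorial := by positivity
  have hv : (0:ℝ) ≤ v := le_of_lt (lt_of_lt_of_le h0 h1)
  apply mul_le_mul
  · exact b1.trans (div_le_div_of_nonneg_right e1 f1.le)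
  · exact b2.trans (div_le_div_of_nonneg_right e2 f2.le)
  · exact norm_nonneg _
  · exact div_nonneg (pow_nonneg hv _) f1.le

lemma Pterm_integral {v : ℝ} (hv : 0 ≤ v) (p : ℕ × ℕ) :
    ∫ w in Set.Ioc (0:ℝ) v, Pterm v p w = Hval v p := by
  rw [← intervalIntegral.integral_of_le hv]
  have : ∀ w : ℝ, Pterm v p w =
      ((-1:ℝ)^p.2 / ((p.1.factorial : ℝ) * ((p.1+1).factorial : ℝ) *
        (p.2.factorial : ℝ) * ((p.2+1).factorial : ℝ))) * (w ^ p.1 * (v - w) ^ p.2) := by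
    intro w
    rw [Pterm, neg_pow]
    ring
  simp only [this]
  rw [intervalIntegral.integral_const_mul, betaInt]
  rw [Hval]
  have f1 : (0:ℝ) < p.1.factorial := by positivity
  have f2 : (0:ℝ) < p.2.factorial := by positivity
  have f3 : (0:ℝ) < ((p.1+1).factorial : ℝ) := by positivity
  have f4 : (0:ℝ) < ((p.2+1).factorial : ℝ) := by positivity
  have f5 : (0:ℝ) < ((p.1+p.2+1).factorial : ℝ) := by positivity
  field_simp

lemma summable_bound {v : ℝ} (hv : 0 ≤ v) :
    Summable (fun p : ℕ × ℕ => (v ^ p.1 / p.1.factorial) * (v ^ p.2 / p.2.factorial) * v) := by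
  apply Summable.mul_right
  exact (Real.summable_pow_div_factorial v).mul_of_nonneg
    (Real.summable_pow_div_factorial v)
    (fun n => by positivity) (fun n => by positivity)

lemma Hval_bound {v : ℝ} (hv : 0 ≤ v) (p : ℕ × ℕ) :
    ‖Hval v p‖ ≤ (v ^ p.1 / p.1.factorial) * (v ^ p.2 / p.2.factorial) * v := by
  rw [Hval, norm_div, norm_mul, norm_pow, norm_neg, norm_one, one_pow, one_mul, norm_pow]
  have f1 : (0:ℝ) < p.1.factorial := by positivity
  have f2 : (0:ℝ) < p.2.factorial := by positivity
  have h1 : (p.1.factorial : ℝ) ≤ ((p.1+1).factorial : ℝ) := by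
    exact_mod_cast Nat.factorial_le (Nat.le_succ _)
  have h2 : (p.2.factorial : ℝ) ≤ ((p.2+1).factorial : ℝ) := by
    exact_mod_cast Nat.factorial_le (Nat.le_succ _)
  have h3 : (1:ℝ) ≤ ((p.1+p.2+1).factorial : ℝ) := by
    exact_mod_cast Nat.one_le_iff_ne_zero.2 (Nat.factorial_ne_zero _)
  have hnorm : ‖(((p.1+1).factorial : ℝ) * ((p.2+1).factorial : ℝ) *
      ((p.1+p.2+1).factorial : ℝ))‖ = ((p.1+1).factorial : ℝ) * ((p.2+1).factorial : ℝ) *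
      ((p.1+p.2+1).factorial : ℝ) := by
    rw [Real.norm_eq_abs, abs_of_pos (by positivity)]
  rw [hnorm]
  have hvn : ‖v‖ = v := by rw [Real.norm_eq_abs, abs_of_nonneg hv]
  rw [hvn]
  have key : (v ^ p.1 / p.1.factorial) * (v ^ p.2 / p.2.factorial) * v
      = v ^ (p.1+p.2+1) / ((p.1.factorial : ℝ) * (p.2.factorial : ℝ) * 1) := by
    rw [pow_add, pow_add, pow_one]; field_simp
  rw [key]
  apply div_le_div_of_nonneg_left (by positivity) (by positivity)
  calc (p.1.factorial : ℝ) * (p.2.factorial : ℝ) * 1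
      ≤ ((p.1+1).factorial : ℝ) * ((p.2+1).factorial : ℝ) * ((p.1+p.2+1).factorial : ℝ) := by
        apply mul_le_mul (mul_le_mul h1 h2 (by positivity) (by positivity)) h3
          (by norm_num) (by positivity)

lemma Hval_summable {v : ℝ} (hv : 0 ≤ v) : Summable (Hval v) :=
  Summable.of_norm_bounded (summable_bound hv) (Hval_bound hv)

lemma Hval_tsum {v : ℝ} (hv : 0 ≤ v) :
    ∑' p : ℕ × ℕ, Hval v p
      = ∑' N : ℕ, (1 + (-1:ℝ)^N) * v^(N+1) / (((N+1).factorial : ℝ) * ((N+2).factorial : ℝ)) := by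
  have hsig : Summable (Hval v ∘ ⇑(Finset.HasAntidiagonal.sigmaAntidiagonalEquivProd (A := ℕ))) :=
    Finset.HasAntidiagonal.sigmaAntidiagonalEquivProd.summable_iff.2 (Hval_summable hv)
  rw [← Finset.HasAntidiagonal.sigmaAntidiagonalEquivProd.tsum_eq (Hval v),
    show (fun (x : Σ n : ℕ, (Finset.HasAntidiagonal.antidiagonal n : Finset (ℕ × ℕ))) =>
      Hval v (Finset.HasAntidiagonal.sigmaAntidiagonalEquivProd x))
      = (Hval v ∘ ⇑(Finset.HasAntidiagonal.sigmaAntidiagonalEquivProd (A := ℕ))) from rfl,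
    Summable.tsum_sigma' (fun N => (hasSum_fintype _).summable) hsig]
  refine tsum_congr fun N => ?_
  have : ∑' (c : (Finset.HasAntidiagonal.antidiagonal N : Finset (ℕ × ℕ))),
      (Hval v ∘ ⇑(Finset.HasAntidiagonal.sigmaAntidiagonalEquivProd (A := ℕ))) ⟨N, c⟩
      = ∑ p ∈ Finset.HasAntidiagonal.antidiagonal N, Hval v p := by
    simp only [Function.comp, Finset.HasAntidiagonal.sigmaAntidiagonalEquivProd, Equiv.coe_fn_mk]
    exact Finset.tsum_subtype _ _
  rw [this]
  have hterm : ∀ p ∈ Finset.HasAntidiagonal.antidiagonal N, Hval v p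
      = (v^(N+1) / ((N+1).factorial : ℝ)) *
        ((-1:ℝ)^p.2 / (((p.1+1).factorial : ℝ) * ((p.2+1).factorial : ℝ))) := by
    intro p hp
    rw [Finset.HasAntidiagonal.mem_antidiagonal] at hp
    rw [Hval, hp]
    have f3 : (0:ℝ) < ((p.1+1).factorial : ℝ) := by positivity
    have f4 : (0:ℝ) < ((p.2+1).factorial : ℝ) := by positivity
    have f5 : (0:ℝ) < ((N+1).factorial : ℝ) := by positivity
    field_simp
  rw [Finset.sum_congr rfl hterm, ← Finset.mul_sum, coeff_id N]
  have f5 : (0:ℝ) < ((N+1).factorial : ℝ) := by positivity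
  have f6 : (0:ℝ) < ((N+2).factorial : ℝ) := by positivity
  field_simp

lemma Gsub_tsum {v : ℝ} :
    Gfun v - Gfun (-v)
      = ∑' N : ℕ, (1 + (-1:ℝ)^N) * v^(N+1) / (((N+1).factorial : ℝ) * ((N+2).factorial : ℝ)) := by
  unfold Gfun
  rw [← Summable.tsum_sub (Gsummable v) (Gsummable (-v))]
  have hgs : Summable (fun k : ℕ => v ^ k / ((k.factorial : ℝ) * ((k + 1).factorial : ℝ))
      - (-v) ^ k / ((k.factorial : ℝ) * ((k + 1).factorial : ℝ))) :=
    (Gsummable v).sub (Gsummable (-v))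
  rw [Summable.tsum_eq_zero_add hgs]
  have h0 : v ^ 0 / ((Nat.factorial 0 : ℝ) * ((0 + 1).factorial : ℝ))
      - (-v) ^ 0 / ((Nat.factorial 0 : ℝ) * ((0 + 1).factorial : ℝ)) = 0 := by norm_num
  rw [h0, zero_add]
  refine tsum_congr fun N => ?_
  have f5 : (0:ℝ) < ((N+1).factorial : ℝ) := by positivity
  have f6 : (0:ℝ) < ((N+2).factorial : ℝ) := by positivity
  have hneg : (-v) ^ (N+1) = -((-1:ℝ)^N * v^(N+1)) := by
    rw [neg_pow, pow_succ]
    ring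
  rw [hneg]
  have hc : N+1+1 = N+2 := rfl
  rw [hc]
  field_simp
  ring

lemma Gconv {v : ℝ} (hv : 0 ≤ v) :
    ∫ w in (0:ℝ)..v, Gfun w * Gfun (-(v - w)) = Gfun v - Gfun (-v) := by
  have hint_each : ∀ p : ℕ × ℕ, Integrable (Pterm v p) (volume.restrict (Set.Ioc 0 v)) :=
    fun p => (Pterm_cont v p).integrableOn_Ioc
  have hbound : ∀ p : ℕ × ℕ,
      (∫ w in Set.Ioc (0:ℝ) v, ‖Pterm v p w‖)
        ≤ (v ^ p.1 / p.1.factorial) * (v ^ p.2 / p.2.factorial) * v := by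
    intro p
    have hci : IntegrableOn (fun w => ‖Pterm v p w‖) (Set.Ioc (0:ℝ) v) volume :=
      (hint_each p).norm
    calc (∫ w in Set.Ioc (0:ℝ) v, ‖Pterm v p w‖)
        ≤ ∫ _w in Set.Ioc (0:ℝ) v, (v ^ p.1 / p.1.factorial) * (v ^ p.2 / p.2.factorial) := by
          apply setIntegral_mono_on hci (integrableOn_const measure_Ioc_lt_top.ne)
            measurableSet_Ioc
          intro w hw
          exact Pterm_bound p hw
      _ = (v ^ p.1 / p.1.factorial) * (v ^ p.2 / p.2.factorial) * v := by
          rw [setIntegral_const, measureReal_def, Real.volume_Ioc, smul_eq_mul]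
          rw [ENNReal.toReal_ofReal (by linarith)]
          ring
  have hsum_int : Summable (fun p : ℕ × ℕ => ∫ w in Set.Ioc (0:ℝ) v, ‖Pterm v p w‖) :=
    Summable.of_nonneg_of_le (fun p => integral_nonneg fun w => norm_nonneg _)
      hbound (summable_bound hv)
  have hswap := MeasureTheory.integral_tsum_of_summable_integral_norm hint_each hsum_int
  calc ∫ w in (0:ℝ)..v, Gfun w * Gfun (-(v - w))
      = ∫ w in Set.Ioc (0:ℝ) v, (∑' p : ℕ × ℕ, Pterm v p w) := by
        rw [intervalIntegral.integral_of_le hv]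
        exact setIntegral_congr_fun measurableSet_Ioc (fun w _ => Gmul_eq_tsum w (-(v - w)))
    _ = ∑' p : ℕ × ℕ, ∫ w in Set.Ioc (0:ℝ) v, Pterm v p w := hswap.symm
    _ = ∑' p : ℕ × ℕ, Hval v p := tsum_congr fun p => Pterm_integral hv p
    _ = Gfun v - Gfun (-v) := by rw [Hval_tsum hv, ← Gsub_tsum]

lemma Kker_cont {ε lam : ℝ} : Continuous (fun p : ℝ × ℝ => Kker ε lam p.1 p.2) := by
  unfold Kker
  exact ((continuous_const.mul continuous_snd).mul
    (Gcont.comp (by fun_prop)))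

lemma Lker_cont {ε lam : ℝ} : Continuous (fun p : ℝ × ℝ => Lker ε lam p.1 p.2) := by
  unfold Lker
  exact ((continuous_const.mul continuous_snd).mul
    (Gcont.comp (by fun_prop)))

lemma kernel_id {ε lam : ℝ} (hε : 0 < ε) (hlam : 0 < lam) {x y : ℝ} (hy : 0 ≤ y) (hxy : y ≤ x) :
    (∫ s in y..x, Lker ε lam x s * Kker ε lam s y) = Lker ε lam x y - Kker ε lam x y ∧
    (∫ s in y..x, Kker ε lam x s * Lker ε lam s y) = Lker ε lam x y - Kker ε lam x y := by
  set a : ℝ := lam / (4 * ε) with ha_def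
  have ha : 0 < a := by positivity
  set v : ℝ := a * (x ^ 2 - y ^ 2) with hv_def
  have hv : 0 ≤ v := by
    apply mul_nonneg ha.le
    nlinarith
  have harg : ∀ t : ℝ, lam * t / (4 * ε) = a * t := fun t => by rw [ha_def]; ring
  have hphi : ∀ s ∈ uIcc y x, HasDerivAt (fun s : ℝ => a * (s ^ 2 - y ^ 2)) (2 * a * s) s := by
    intro s _
    have h1 : HasDerivAt (fun s : ℝ => s ^ 2 - y ^ 2) (2 * s) s := by
      simpa using ((hasDerivAt_pow 2 s).sub_const (y ^ 2))
    convert h1.const_mul a using 1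
    · rfl
    · rfl
    ring
  have hphiy : a * (y ^ 2 - y ^ 2) = 0 := by ring
  have hphix : a * (x ^ 2 - y ^ 2) = v := rfl
  have hLK : ∀ s : ℝ, Lker ε lam x s * Kker ε lam s y
      = (2 * a * y) * ((2 * a * s) •
          ((fun w => Gfun w * Gfun (-(v - w))) ∘ (fun s : ℝ => a * (s ^ 2 - y ^ 2))) s) := by
    intro s
    rw [Lker, Kker, smul_eq_mul]
    simp only [Function.comp]
    have e1 : -(lam * (x ^ 2 - s ^ 2)) / (4 * ε) = -(v - a * (s ^ 2 - y ^ 2)) := by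
      rw [hv_def, ha_def]; ring
    have e2 : lam * (s ^ 2 - y ^ 2) / (4 * ε) = a * (s ^ 2 - y ^ 2) := harg _
    rw [e1, e2]
    have e3 : lam / (2 * ε) = 2 * a := by rw [ha_def]; ring
    rw [e3]
    ring
  have hKL : ∀ s : ℝ, Kker ε lam x s * Lker ε lam s y
      = (2 * a * y) * ((2 * a * s) •
          ((fun w => Gfun (v - w) * Gfun (-w)) ∘ (fun s : ℝ => a * (s ^ 2 - y ^ 2))) s) := by
    intro s
    rw [Lker, Kker, smul_eq_mul]
    simp only [Function.comp]
    have e1 : lam * (x ^ 2 - s ^ 2) / (4 * ε) = v - a * (s ^ 2 - y ^ 2) := by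
      rw [hv_def, ha_def]; ring
    have e2 : -(lam * (s ^ 2 - y ^ 2)) / (4 * ε) = -(a * (s ^ 2 - y ^ 2)) := by
      rw [ha_def]; ring
    rw [e1, e2]
    have e3 : lam / (2 * ε) = 2 * a := by rw [ha_def]; ring
    rw [e3]
    ring
  have hRHS : Lker ε lam x y - Kker ε lam x y = (2 * a * y) * (Gfun v - Gfun (-v)) := by
    rw [Lker, Kker]
    have e5 : lam * (x ^ 2 - y ^ 2) / (4 * ε) = a * (x ^ 2 - y ^ 2) := harg _
    rw [e5]
    have e3 : lam / (2 * ε) = 2 * a := by rw [ha_def]; ring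
    have e4 : -(lam * (x ^ 2 - y ^ 2)) / (4 * ε) = -v := by rw [hv_def, ha_def]; ring
    rw [e3, e4, hphix]
    ring
  have hcont1 : Continuous fun w => Gfun w * Gfun (-(v - w)) :=
    Gcont.mul (Gcont.comp (by fun_prop))
  have hcont2 : Continuous fun w => Gfun (v - w) * Gfun (-w) :=
    (Gcont.comp (by fun_prop)).mul (Gcont.comp (by fun_prop))
  constructor
  · simp only [hLK]
    rw [intervalIntegral.integral_const_mul,
      intervalIntegral.integral_comp_smul_deriv hphi (by fun_prop) hcont1,
      hphiy, hphix, Gconv hv, hRHS]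
  · simp only [hKL]
    rw [intervalIntegral.integral_const_mul,
      intervalIntegral.integral_comp_smul_deriv hphi (by fun_prop) hcont2,
      hphiy, hphix]
    have hrefl : (∫ w in (0:ℝ)..v, Gfun (v - w) * Gfun (-w))
        = ∫ w in (0:ℝ)..v, Gfun w * Gfun (-(v - w)) := by
      have := intervalIntegral.integral_comp_sub_left (a := (0:ℝ)) (b := v)
        (fun w => Gfun w * Gfun (-(v - w))) v
      simp only [sub_zero, sub_self] at this
      rw [← this]
      congr 1
      funext w
      have : v - (v - w) = w := by ring
      rw [this]
    rw [hrefl, Gconv hv, hRHS]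

lemma triangle_swap {x : ℝ} (hx : 0 ≤ x) {F : ℝ → ℝ → ℝ}
    (hF : Continuous (Function.uncurry F)) :
    (∫ s in (0:ℝ)..x, ∫ y in (0:ℝ)..s, F s y) = ∫ y in (0:ℝ)..x, ∫ s in y..x, F s y := by
  set T : Set (ℝ × ℝ) := {p | 0 < p.2 ∧ p.2 ≤ p.1} with hT
  have hTm : MeasurableSet T :=
    (measurableSet_lt measurable_const measurable_snd).inter
      (measurableSet_le measurable_snd measurable_fst)
  set g : ℝ → ℝ → ℝ := fun s y => T.indicator (Function.uncurry F) (s, y) with hg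
  have hguncurry : Function.uncurry g = T.indicator (Function.uncurry F) := by
    funext p; rw [hg]; rfl
  have hIF : IntegrableOn (Function.uncurry F) (Set.Ioc 0 x ×ˢ Set.Ioc 0 x) volume := by
    apply (hF.continuousOn.integrableOn_compact (isCompact_Icc.prod isCompact_Icc)).mono_set
    exact Set.prod_mono Set.Ioc_subset_Icc_self Set.Ioc_subset_Icc_self
  have hint : Integrable (Function.uncurry g)
      (((volume : Measure ℝ).restrict (Set.Ioc 0 x)).prod
        ((volume : Measure ℝ).restrict (Set.Ioc 0 x))) := by
    rw [hguncurry, MeasureTheory.Measure.prod_restrict]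
    apply Integrable.indicator _ hTm
    rw [← MeasureTheory.Measure.volume_eq_prod]
    exact hIF
  have h1 : ∀ s ∈ Set.Ioc (0:ℝ) x, (∫ y in (0:ℝ)..s, F s y) = ∫ y in Set.Ioc (0:ℝ) x, g s y := by
    intro s hs
    have : ∀ y : ℝ, g s y = (Set.Ioc (0:ℝ) s).indicator (fun y => F s y) y := by
      intro y
      show T.indicator (Function.uncurry F) (s, y) = _
      by_cases h : y ∈ Set.Ioc (0:ℝ) s
      · rw [Set.indicator_of_mem h]
        have : (s, y) ∈ T := ⟨h.1, h.2⟩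
        rw [Set.indicator_of_mem this]; rfl
      · rw [Set.indicator_of_notMem h, Set.indicator_of_notMem]
        intro hmem
        exact h ⟨hmem.1, hmem.2⟩
    rw [intervalIntegral.integral_of_le hs.1.le]
    rw [show (fun y => g s y) = (Set.Ioc (0:ℝ) s).indicator (fun y => F s y) from funext this]
    rw [MeasureTheory.setIntegral_indicator measurableSet_Ioc]
    congr 1
    rw [Set.Ioc_inter_Ioc]
    simp [hs.2, min_eq_right]
  have h2 : ∀ y ∈ Set.Ioc (0:ℝ) x, (∫ s in Set.Ioc (0:ℝ) x, g s y) = ∫ s in y..x, F s y := by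
    intro y hy
    have : ∀ s : ℝ, g s y = (Set.Ici y).indicator (fun s => F s y) s := by
      intro s
      show T.indicator (Function.uncurry F) (s, y) = _
      by_cases h : s ∈ Set.Ici y
      · rw [Set.indicator_of_mem h, Set.indicator_of_mem (show (s,y) ∈ T from ⟨hy.1, h⟩)]; rfl
      · rw [Set.indicator_of_notMem h, Set.indicator_of_notMem]
        intro hmem
        exact h hmem.2
    rw [show (fun s => g s y) = (Set.Ici y).indicator (fun s => F s y) from funext this]
    rw [MeasureTheory.setIntegral_indicator measurableSet_Ici]
    rw [intervalIntegral.integral_of_le hy.2]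
    have hset : Set.Ioc (0:ℝ) x ∩ Set.Ici y = Set.Icc y x := by
      ext s
      simp only [Set.mem_inter_iff, Set.mem_Ioc, Set.mem_Ici, Set.mem_Icc]
      constructor
      · rintro ⟨⟨_, h2⟩, h3⟩; exact ⟨h3, h2⟩
      · rintro ⟨h1, h2⟩; exact ⟨⟨lt_of_lt_of_le hy.1 h1, h2⟩, h1⟩
    rw [hset, MeasureTheory.integral_Icc_eq_integral_Ioc]
  calc (∫ s in (0:ℝ)..x, ∫ y in (0:ℝ)..s, F s y)
      = ∫ s in Set.Ioc (0:ℝ) x, ∫ y in Set.Ioc (0:ℝ) x, g s y := by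
        rw [intervalIntegral.integral_of_le hx]
        exact MeasureTheory.setIntegral_congr_fun measurableSet_Ioc h1
    _ = ∫ y in Set.Ioc (0:ℝ) x, ∫ s in Set.Ioc (0:ℝ) x, g s y :=
        MeasureTheory.integral_integral_swap hint
    _ = ∫ y in Set.Ioc (0:ℝ) x, ∫ s in y..x, F s y :=
        MeasureTheory.setIntegral_congr_fun measurableSet_Ioc h2
    _ = ∫ y in (0:ℝ)..x, ∫ s in y..x, F s y := (intervalIntegral.integral_of_le hx).symm

lemma volterra_key {x : ℝ} (hx0 : 0 ≤ x) {f : ℝ → ℝ} (hf : Continuous f)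
    {M N : ℝ → ℝ → ℝ} (hM : Continuous (fun p : ℝ × ℝ => M p.1 p.2))
    (hN : Continuous (fun p : ℝ × ℝ => N p.1 p.2))
    {R : ℝ → ℝ} (hR : Continuous R)
    (hid : ∀ t, 0 ≤ t → t ≤ x → (∫ s in t..x, M x s * N s t) = R t) :
    (∫ s in (0:ℝ)..x, M x s * (∫ t in (0:ℝ)..s, N s t * f t))
      = ∫ t in (0:ℝ)..x, R t * f t := by
  have hMx : Continuous (fun p : ℝ × ℝ => M x p.1) :=
    hM.comp (continuous_const.prodMk continuous_fst)
  have hFc : Continuous (Function.uncurry (fun s t : ℝ => M x s * N s t * f t)) :=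
    (hMx.mul hN).mul (hf.comp continuous_snd)
  have step1 : ∀ s : ℝ, M x s * (∫ t in (0:ℝ)..s, N s t * f t)
      = ∫ t in (0:ℝ)..s, M x s * N s t * f t := by
    intro s
    rw [← intervalIntegral.integral_const_mul]
    congr 1; funext t; ring
  simp only [step1]
  rw [triangle_swap hx0 hFc]
  rw [intervalIntegral.integral_of_le hx0, intervalIntegral.integral_of_le hx0]
  apply MeasureTheory.setIntegral_congr_fun measurableSet_Ioc
  intro t ht
  have huse : ∀ s : ℝ, M x s * N s t * f t = (M x s * N s t) * f t := fun s => by ring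
  simp only [huse]
  rw [intervalIntegral.integral_mul_const, hid t ht.1.le ht.2]


/-- the backstepping transformation `(Tf)(x) = f(x) - ∫₀ˣ K(x,y)f(y)dy`
is invertible on `C⁰([0,1])` with inverse `(Sf)(x) = f(x) + ∫₀ˣ L(x,y)f(y)dy`. -/
theorem backstepping_transformation_inverse (ε lam : ℝ) (hε : 0 < ε) (hlam : 0 < lam)
    (T S : (ℝ → ℝ) → ℝ → ℝ)
    (hT : ∀ f x, T f x = f x - ∫ y in (0:ℝ)..x, Kker ε lam x y * f y)
    (hS : ∀ f x, S f x = f x + ∫ y in (0:ℝ)..x, Lker ε lam x y * f y) :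
    ∀ f : ℝ → ℝ, ContinuousOn f (Set.Icc 0 1) →
      ∀ x ∈ Set.Icc (0:ℝ) 1, S (T f) x = f x ∧ T (S f) x = f x := by
  intro f hf x hx
  obtain ⟨hx0, hx1⟩ := hx
  set f' : ℝ → ℝ := fun t => f (max 0 (min 1 t)) with hf'def
  have hf'c : Continuous f' := by
    apply hf.comp_continuous (by fun_prop)
    intro t
    exact ⟨le_max_left _ _, max_le zero_le_one (min_le_left _ _)⟩
  have hEq : ∀ t ∈ Set.Icc (0:ℝ) 1, f t = f' t := by
    intro t ht
    rw [hf'def]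
    simp only []
    rw [min_eq_right ht.2, max_eq_right ht.1]
  have hsub : ∀ {y : ℝ}, 0 ≤ y → y ≤ 1 → Set.uIcc 0 y ⊆ Set.Icc (0:ℝ) 1 := by
    intro y h0 h1
    rw [Set.uIcc_of_le h0]
    exact Set.Icc_subset_Icc le_rfl h1
  have hx01 : x ∈ Set.Icc (0:ℝ) 1 := ⟨hx0, hx1⟩
  have hKx : Continuous fun y => Kker ε lam x y :=
    Kker_cont.comp (continuous_const.prodMk continuous_id)
  have hLx : Continuous fun y => Lker ε lam x y :=
    Lker_cont.comp (continuous_const.prodMk continuous_id)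
  have hKf' : Continuous (Function.uncurry fun s t : ℝ => Kker ε lam s t * f' t) :=
    Kker_cont.mul (hf'c.comp continuous_snd)
  have hLf' : Continuous (Function.uncurry fun s t : ℝ => Lker ε lam s t * f' t) :=
    Lker_cont.mul (hf'c.comp continuous_snd)
  have hinnerK : Continuous fun y => ∫ t in (0:ℝ)..y, Kker ε lam y t * f' t :=
    continuous_parametric_intervalIntegral_of_continuous hKf' continuous_id
  have hinnerL : Continuous fun y => ∫ t in (0:ℝ)..y, Lker ε lam y t * f' t :=
    continuous_parametric_intervalIntegral_of_continuous hLf' continuous_id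
  have hxmem : x ∈ Set.uIcc (0:ℝ) x := by
    rw [Set.uIcc_of_le hx0]; exact ⟨hx0, le_rfl⟩
  have hTeq : ∀ y ∈ Set.uIcc (0:ℝ) x,
      T f y = f' y - ∫ t in (0:ℝ)..y, Kker ε lam y t * f' t := by
    intro y hy
    rw [Set.uIcc_of_le hx0] at hy
    have hy1 : y ∈ Set.Icc (0:ℝ) 1 := ⟨hy.1, hy.2.trans hx1⟩
    rw [hT, ← hEq y hy1]
    congr 1
    apply intervalIntegral.integral_congr
    intro t ht
    show Kker ε lam y t * f t = Kker ε lam y t * f' t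
    rw [hEq t (hsub hy.1 hy1.2 ht)]
  have hSeq : ∀ y ∈ Set.uIcc (0:ℝ) x,
      S f y = f' y + ∫ t in (0:ℝ)..y, Lker ε lam y t * f' t := by
    intro y hy
    rw [Set.uIcc_of_le hx0] at hy
    have hy1 : y ∈ Set.Icc (0:ℝ) 1 := ⟨hy.1, hy.2.trans hx1⟩
    rw [hS, ← hEq y hy1]
    congr 1
    apply intervalIntegral.integral_congr
    intro t ht
    show Lker ε lam y t * f t = Lker ε lam y t * f' t
    rw [hEq t (hsub hy.1 hy1.2 ht)]
  have hexpand : (∫ t in (0:ℝ)..x, (Lker ε lam x t - Kker ε lam x t) * f' t)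
      = (∫ t in (0:ℝ)..x, Lker ε lam x t * f' t)
        - ∫ t in (0:ℝ)..x, Kker ε lam x t * f' t := by
    rw [← intervalIntegral.integral_sub (f := fun t => Lker ε lam x t * f' t)
      (g := fun t => Kker ε lam x t * f' t) ((hLx.mul hf'c).intervalIntegrable _ _)
      ((hKx.mul hf'c).intervalIntegrable _ _)]
    congr 1; funext t; ring
  constructor
  · -- S (T f) x = f x
    rw [hS (T f) x,
      intervalIntegral.integral_congr (g := fun y =>
        Lker ε lam x y * (f' y - ∫ t in (0:ℝ)..y, Kker ε lam y t * f' t))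
        (fun y hy => by rw [hTeq y hy]),
      hTeq x hxmem]
    have hsplit : (∫ y in (0:ℝ)..x,
        Lker ε lam x y * (f' y - ∫ t in (0:ℝ)..y, Kker ε lam y t * f' t))
        = (∫ y in (0:ℝ)..x, Lker ε lam x y * f' y)
          - ∫ y in (0:ℝ)..x, Lker ε lam x y * (∫ t in (0:ℝ)..y, Kker ε lam y t * f' t) := by
      rw [← intervalIntegral.integral_sub (f := fun y => Lker ε lam x y * f' y)
        (g := fun y => Lker ε lam x y * (∫ t in (0:ℝ)..y, Kker ε lam y t * f' t)) ((hLx.mul hf'c).intervalIntegrable _ _)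
        ((hLx.mul hinnerK).intervalIntegrable _ _)]
      congr 1; funext y; ring
    have hdouble : (∫ s in (0:ℝ)..x,
        Lker ε lam x s * (∫ t in (0:ℝ)..s, Kker ε lam s t * f' t))
        = ∫ t in (0:ℝ)..x, (Lker ε lam x t - Kker ε lam x t) * f' t :=
      volterra_key hx0 hf'c Lker_cont Kker_cont
        (R := fun t => Lker ε lam x t - Kker ε lam x t) (by fun_prop)
        (fun t ht0 htx => (kernel_id hε hlam ht0 htx).1)
    rw [hsplit, hdouble, hexpand, hEq x hx01]
    ring
  · -- T (S f) x = f x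
    rw [hT (S f) x,
      intervalIntegral.integral_congr (g := fun y =>
        Kker ε lam x y * (f' y + ∫ t in (0:ℝ)..y, Lker ε lam y t * f' t))
        (fun y hy => by rw [hSeq y hy]),
      hSeq x hxmem]
    have hsplit : (∫ y in (0:ℝ)..x,
        Kker ε lam x y * (f' y + ∫ t in (0:ℝ)..y, Lker ε lam y t * f' t))
        = (∫ y in (0:ℝ)..x, Kker ε lam x y * f' y)
          + ∫ y in (0:ℝ)..x, Kker ε lam x y * (∫ t in (0:ℝ)..y, Lker ε lam y t * f' t) := by
      rw [← intervalIntegral.integral_add (f := fun y => Kker ε lam x y * f' y)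
        (g := fun y => Kker ε lam x y * (∫ t in (0:ℝ)..y, Lker ε lam y t * f' t)) ((hKx.mul hf'c).intervalIntegrable _ _)
        ((hKx.mul hinnerL).intervalIntegrable _ _)]
      congr 1; funext y; ring
    have hdouble : (∫ s in (0:ℝ)..x,
        Kker ε lam x s * (∫ t in (0:ℝ)..s, Lker ε lam s t * f' t))
        = ∫ t in (0:ℝ)..x, (Lker ε lam x t - Kker ε lam x t) * f' t :=
      volterra_key hx0 hf'c Kker_cont Lker_cont
        (R := fun t => Lker ε lam x t - Kker ε lam x t) (by fun_prop)
        (fun t ht0 htx => (kernel_id hε hlam ht0 htx).2)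
    rw [hsplit, hdouble, hexpand, hEq x hx01]
    ring

end
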